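/- Let E = A(B₂ⁿ) be an ellipsoid in ℝⁿ centered at the origin, where A is an invertible linear map and B₂ⁿ is the closed unit Euclidean ball. Then for every x ∈ ℝⁿ, ∫_{S^{n-1}} |⟨x, θ⟩| · ρ_E(θ)^{n+1} dθ = 2 (κ_{n−1}/κₙ) · vol(E) · h_E(x), where the integration is with respect to the spherical Lebesgue measure. Equivalently, ∫_{S^{n-1}} |⟨x, θ⟩| ‖θ‖_E^{−n−1} dθ = 2 κ_{n−1} |det A| · |Aᵀx|. -/

import Mathlib

open MeasureTheory Real Set
open scoped RealInnerProductSpace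
open scoped ENNReal

noncomputable def sphereMeasure (n : ℕ) :
    Measure (Metric.sphere (0 : EuclideanSpace ℝ (Fin n)) 1) :=
  (volume : Measure (EuclideanSpace ℝ (Fin n))).toSphere

noncomputable def radial {n : ℕ} (K : Set (EuclideanSpace ℝ (Fin n)))
    (x : EuclideanSpace ℝ (Fin n)) : ℝ :=
  sSup {t : ℝ | 0 ≤ t ∧ t • x ∈ K}

/-- The support function `h_K(x) = max_{y ∈ K} ⟨x, y⟩`. -/
noncomputable def suppFn {n : ℕ} (K : Set (EuclideanSpace ℝ (Fin n)))
    (x : EuclideanSpace ℝ (Fin n)) : ℝ :=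
  sSup ((fun y => ⟪x, y⟫) '' K)

/-- `κₘ = π^{m/2} / Γ(m/2 + 1)`, the volume of the unit Euclidean ball in `ℝᵐ`. -/
noncomputable def kappa (m : ℕ) : ℝ :=
  Real.pi ^ ((m : ℝ) / 2) / Real.Gamma ((m : ℝ) / 2 + 1)


-- Lemma C
theorem lemC (v : EuclideanSpace ℝ (Fin n)) :
    sSup ((fun z => ⟪v, z⟫) '' Metric.closedBall 0 1) = ‖v‖ := by
  apply IsGreatest.csSup_eq
  constructor
  · rcases eq_or_ne v 0 with rfl | hv
    · exact ⟨0, Metric.mem_closedBall_self (by norm_num), by simp⟩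
    · refine ⟨‖v‖⁻¹ • v, ?_, ?_⟩
      · simp [Metric.mem_closedBall, dist_zero_right, norm_smul, abs_of_nonneg,
          inv_mul_cancel₀ (norm_ne_zero_iff.2 hv)]
      · show ⟪v, ‖v‖⁻¹ • v⟫ = ‖v‖
        rw [real_inner_smul_right, real_inner_self_eq_norm_sq]
        field_simp
  · rintro _ ⟨z, hz, rfl⟩
    calc ⟪v, z⟫ ≤ ‖v‖ * ‖z‖ := real_inner_le_norm v z
    _ ≤ ‖v‖ * 1 := by
        have := Metric.mem_closedBall.1 hz
        rw [dist_zero_right] at this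
        exact mul_le_mul_of_nonneg_left this (norm_nonneg _)
    _ = ‖v‖ := mul_one _

-- Lemma A
theorem lemA (A : EuclideanSpace ℝ (Fin n) ≃ₗ[ℝ] EuclideanSpace ℝ (Fin n))
    (θ : EuclideanSpace ℝ (Fin n)) (hθ : ‖θ‖ = 1) :
    sSup {t : ℝ | 0 ≤ t ∧ t • θ ∈ A '' Metric.closedBall 0 1} = ‖A.symm θ‖⁻¹ := by
  have hθ0 : θ ≠ 0 := by intro h; rw [h, norm_zero] at hθ; norm_num at hθ
  have hc : 0 < ‖A.symm θ‖ := norm_pos_iff.2 (by simp [hθ0])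
  have hmem : ∀ t : ℝ, t • θ ∈ A '' Metric.closedBall 0 1 ↔ ‖t • A.symm θ‖ ≤ 1 := by
    intro t
    constructor
    · rintro ⟨z, hz, hze⟩
      have : A.symm (t • θ) = z := by rw [← hze]; simp
      rw [_root_.map_smul] at this
      rw [this]
      simpa [Metric.mem_closedBall, dist_zero_right] using hz
    · intro h
      exact ⟨t • A.symm θ, by simpa [Metric.mem_closedBall, dist_zero_right] using h,
        by rw [_root_.map_smul]; simp⟩
  have hset : {t : ℝ | 0 ≤ t ∧ t • θ ∈ A '' Metric.closedBall 0 1} = Icc 0 ‖A.symm θ‖⁻¹ := by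
    ext t
    simp only [mem_setOf_eq, mem_Icc, and_congr_right_iff]
    intro ht
    rw [hmem, norm_smul, Real.norm_eq_abs, abs_of_nonneg ht, ← le_div_iff₀ hc, one_div]
  rw [hset]
  exact csSup_Icc (by positivity)

theorem lemE {n : ℕ} (hn : 0 < n) (c : ℝ) (hc : 0 ≤ c) :
    ∫⁻ u : Fin n → ℝ, ENNReal.ofReal (c * |u ⟨0, hn⟩| * rexp (-∑ i, (u i)^2))
      = ENNReal.ofReal (c * Real.sqrt π ^ (n - 1)) := by
  obtain ⟨m, rfl⟩ : ∃ m, n = m + 1 := ⟨n - 1, (Nat.succ_pred_eq_of_pos hn).symm⟩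
  set f : Fin (m+1) → ℝ → ℝ := fun i t => (if i = 0 then c * |t| else 1) * rexp (-t^2) with hf
  have hprod : ∀ u : Fin (m+1) → ℝ,
      c * |u ⟨0, hn⟩| * rexp (-∑ i, (u i)^2) = ∏ i, f i (u i) := by
    intro u
    rw [hf]
    simp only
    rw [Finset.prod_mul_distrib]
    have h1 : (∏ i : Fin (m+1), if i = 0 then c * |u i| else 1) = c * |u 0| := by
      rw [Finset.prod_ite_eq' Finset.univ (0 : Fin (m+1)) (fun i => c * |u i|)]
      simp
    have h2 : (∏ i : Fin (m+1), rexp (-(u i)^2)) = rexp (-∑ i, (u i)^2) := by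
      rw [← Real.exp_sum, Finset.sum_neg_distrib]
    rw [h1, h2]
    rfl
  have hint : ∀ i, Integrable (f i) := by
    intro i
    rw [hf]
    by_cases h : i = 0
    · simp only [h, if_true]
      have := (integrable_mul_exp_neg_mul_sq (b := 1) one_pos).abs
      refine (this.const_mul c).congr ?_
      filter_upwards with t
      rw [abs_mul, abs_of_pos (exp_pos _)]
      ring_nf
    · simp only [if_neg h, one_mul]
      have := integrable_exp_neg_mul_sq (b := 1) one_pos
      refine this.congr ?_
      filter_upwards with t
      ring_nf
  have hnn : ∀ u : Fin (m+1) → ℝ, 0 ≤ ∏ i, f i (u i) := by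
    intro u
    apply Finset.prod_nonneg
    intro i _
    rw [hf]
    positivity
  calc ∫⁻ u : Fin (m+1) → ℝ, ENNReal.ofReal (c * |u ⟨0, hn⟩| * rexp (-∑ i, (u i)^2))
      = ∫⁻ u : Fin (m+1) → ℝ, ENNReal.ofReal (∏ i, f i (u i)) := by
        congr 1; ext u; rw [hprod]
    _ = ENNReal.ofReal (∫ u : Fin (m+1) → ℝ, ∏ i, f i (u i)) := by
        exact (ofReal_integral_eq_lintegral_ofReal (Integrable.fin_nat_prod hint)
          (Filter.Eventually.of_forall hnn)).symm
    _ = ENNReal.ofReal (∏ i, ∫ t : ℝ, f i t) := by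
        exact congrArg ENNReal.ofReal (MeasureTheory.integral_fin_nat_prod_eq_prod f)
    _ = ENNReal.ofReal (c * Real.sqrt π ^ m) := by
        congr 1
        have h0 : ∫ t : ℝ, f 0 t = c := by
          rw [hf]
          simp only [if_true, eq_self_iff_true]
          have habs : ∫ t : ℝ, |t| * rexp (-t^2) = 1 := by
            have h2 : ∫ t : ℝ, |t| * rexp (-(|t|)^2) = 2 * ∫ t in Ioi (0:ℝ), t * rexp (-t^2) :=
              integral_comp_abs (f := fun s => s * rexp (-s^2))
            simp_rw [sq_abs] at h2
            rw [h2]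
            have h3 : ∫ t in Ioi (0:ℝ), t * rexp (-t^2) = 1/2 := by
              have h4 := integral_rpow_mul_exp_neg_mul_rpow (p := 2) (q := 1) (b := 1)
                two_pos (by norm_num) one_pos
              simp_rw [Real.rpow_two, Real.rpow_one, neg_one_mul] at h4
              rw [h4]
              norm_num [Real.Gamma_one]
            rw [h3]; norm_num
          calc ∫ t : ℝ, (if (0 : Fin (m+1)) = 0 then c * |t| else 1) * rexp (-t ^ 2)
              = ∫ t : ℝ, c * (|t| * rexp (-t ^ 2)) := by
                congr 1; ext t; rw [if_pos rfl]; ring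
            _ = c := by rw [integral_const_mul, habs, mul_one]
        have hsucc : ∀ i : Fin m, ∫ t : ℝ, f i.succ t = Real.sqrt π := by
          intro i
          rw [hf]
          simp only [Fin.succ_ne_zero, if_false]
          have := integral_gaussian 1
          simp_rw [neg_one_mul] at this
          rw [show (fun t : ℝ => (1:ℝ) * rexp (-t^2)) = fun t : ℝ => rexp (-t^2) by ext t; ring]
          rw [this, div_one]
        rw [Fin.prod_univ_succ, h0]
        simp_rw [hsucc]
        rw [Finset.prod_const, Finset.card_univ, Fintype.card_fin]
    _ = ENNReal.ofReal (c * Real.sqrt π ^ (m + 1 - 1)) := by norm_num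

theorem lemD {n : ℕ} (hn : 0 < n) (v : EuclideanSpace ℝ (Fin n)) :
    ∫⁻ z : EuclideanSpace ℝ (Fin n), ENNReal.ofReal (|⟪v, z⟫| * rexp (-‖z‖^2))
      = ENNReal.ofReal (‖v‖ * Real.sqrt π ^ (n - 1)) := by
  rcases eq_or_ne v 0 with rfl | hv
  · simp
  · set i0 : Fin n := ⟨0, hn⟩
    set e₀ : EuclideanSpace ℝ (Fin n) := EuclideanSpace.single i0 (1:ℝ) with he₀
    have he₀n : ‖e₀‖ = 1 := by rw [he₀, EuclideanSpace.norm_single, norm_one]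
    set w : EuclideanSpace ℝ (Fin n) := ‖v‖ • e₀ with hw
    have hwn : ‖v‖ = ‖w‖ := by
      rw [hw, norm_smul, he₀n, mul_one, Real.norm_eq_abs, abs_of_nonneg (norm_nonneg _)]
    set Q : EuclideanSpace ℝ (Fin n) ≃ₗᵢ[ℝ] EuclideanSpace ℝ (Fin n) :=
      Submodule.reflection (ℝ ∙ (v - w))ᗮ with hQ
    have hQv : Q v = w := Submodule.reflection_sub hwn
    -- measurability of the integrand
    have hcont : Continuous fun z : EuclideanSpace ℝ (Fin n) =>
        ENNReal.ofReal (|⟪v, z⟫| * rexp (-‖z‖^2)) := by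
      apply ENNReal.continuous_ofReal.comp
      exact ((continuous_const.inner continuous_id).abs.mul
        (Real.continuous_exp.comp ((continuous_norm.pow 2).neg)))
    have hstep1 : ∫⁻ z : EuclideanSpace ℝ (Fin n), ENNReal.ofReal (|⟪v, z⟫| * rexp (-‖z‖^2))
        = ∫⁻ u : EuclideanSpace ℝ (Fin n),
            ENNReal.ofReal (‖v‖ * |u i0| * rexp (-‖u‖^2)) := by
      rw [← (Q.symm.measurePreserving).lintegral_comp hcont.measurable]
      congr 1
      ext u
      have h1 : ⟪v, Q.symm u⟫ = ⟪Q v, u⟫ := by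
        conv_rhs => rw [← Q.apply_symm_apply u]
        rw [Q.inner_map_map]
      have h2 : ⟪Q v, u⟫ = ‖v‖ * u i0 := by
        rw [hQv, hw, real_inner_smul_left, he₀, EuclideanSpace.inner_single_left]
        simp
      rw [h1, h2, Q.symm.norm_map, abs_mul, abs_of_nonneg (norm_nonneg v)]
    rw [hstep1]
    have hcont2 : Continuous fun u : EuclideanSpace ℝ (Fin n) =>
        ENNReal.ofReal (‖v‖ * |u i0| * rexp (-‖u‖^2)) := by
      apply ENNReal.continuous_ofReal.comp
      refine Continuous.mul (Continuous.mul continuous_const ?_)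
        (Real.continuous_exp.comp ((continuous_norm.pow 2).neg))
      exact (continuous_apply i0).abs.comp (PiLp.continuous_ofLp (p := 2) (β := fun _ : Fin n => ℝ))
    rw [← (PiLp.volume_preserving_toLp (Fin n)).lintegral_comp
      hcont2.measurable]
    have hpt : ∀ u : Fin n → ℝ,
        ENNReal.ofReal (‖v‖ * |((WithLp.toLp 2 u)) i0|
          * rexp (-‖(WithLp.toLp 2 u)‖^2))
        = ENNReal.ofReal (‖v‖ * |u i0| * rexp (-∑ i, (u i)^2)) := by
      intro u
      have hco : ∀ i, ((WithLp.toLp 2 u)) i = u i := fun i => rfl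
      have hnorm : ‖(WithLp.toLp 2 u)‖^2 = ∑ i, (u i)^2 := by
        rw [EuclideanSpace.norm_eq, Real.sq_sqrt (by positivity)]
        simp [hco, sq_abs]
      rw [hnorm]
    calc ∫⁻ u : Fin n → ℝ, ENNReal.ofReal (‖v‖ * |((WithLp.toLp 2 u)) i0|
          * rexp (-‖(WithLp.toLp 2 u)‖^2))
        = ∫⁻ u : Fin n → ℝ, ENNReal.ofReal (‖v‖ * |u i0| * rexp (-∑ i, (u i)^2)) := by
          congr 1; ext u; exact hpt u
      _ = ENNReal.ofReal (‖v‖ * Real.sqrt π ^ (n - 1)) := lemE hn ‖v‖ (norm_nonneg v)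

open Metric in
theorem lemPolar {n : ℕ} (hn : 0 < n) (F : EuclideanSpace ℝ (Fin n) → ℝ≥0∞)
    (hF : Measurable F) :
    ∫⁻ y, F y
      = ∫⁻ θ : Metric.sphere (0 : EuclideanSpace ℝ (Fin n)) 1,
          (∫⁻ r in Ioi (0:ℝ), ENNReal.ofReal (r ^ (n-1)) * F (r • (θ : EuclideanSpace ℝ (Fin n))))
          ∂((volume : Measure (EuclideanSpace ℝ (Fin n))).toSphere) := by
  haveI : NeZero n := ⟨hn.ne'⟩
  have hdim : Module.finrank ℝ (EuclideanSpace ℝ (Fin n)) = n := finrank_euclideanSpace_fin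
  set G : Metric.sphere (0 : EuclideanSpace ℝ (Fin n)) 1 × Ioi (0:ℝ) → ℝ≥0∞ :=
    fun p => F ((p.2 : ℝ) • (p.1 : EuclideanSpace ℝ (Fin n))) with hG
  have hGmeas : Measurable G := hF.comp
    ((continuous_subtype_val.comp continuous_snd).smul
      (continuous_subtype_val.comp continuous_fst)).measurable
  calc ∫⁻ y, F y ∂volume
      = ∫⁻ y, F y ∂(volume.restrict {(0 : EuclideanSpace ℝ (Fin n))}ᶜ) := by
        rw [restrict_compl_singleton]
    _ = ∫⁻ a : ({(0 : EuclideanSpace ℝ (Fin n))}ᶜ : Set (EuclideanSpace ℝ (Fin n))), F a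
          ∂((volume : Measure (EuclideanSpace ℝ (Fin n))).comap Subtype.val) :=
        (lintegral_subtype_comap (measurableSet_singleton _).compl _).symm
    _ = ∫⁻ p, G p ∂((volume : Measure (EuclideanSpace ℝ (Fin n))).toSphere.prod
          (Measure.volumeIoiPow (Module.finrank ℝ (EuclideanSpace ℝ (Fin n)) - 1))) := by
        rw [← (Measure.measurePreserving_homeomorphUnitSphereProd
          (volume : Measure (EuclideanSpace ℝ (Fin n)))).lintegral_comp_emb
          (Homeomorph.measurableEmbedding _) G]
        congr 1
        ext a
        symm
        show F (((homeomorphUnitSphereProd _ a).2 : ℝ) • ((homeomorphUnitSphereProd _ a).1 : EuclideanSpace ℝ (Fin n))) = F a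
        rw [homeomorphUnitSphereProd_apply_snd_coe, homeomorphUnitSphereProd_apply_fst_coe,
          smul_inv_smul₀ (norm_ne_zero_iff.2 (Set.mem_compl_singleton_iff.1 a.2))]
    _ = ∫⁻ θ : Metric.sphere (0 : EuclideanSpace ℝ (Fin n)) 1,
          (∫⁻ r : Ioi (0:ℝ), G (θ, r) ∂(Measure.volumeIoiPow (n - 1)))
          ∂((volume : Measure (EuclideanSpace ℝ (Fin n))).toSphere) := by
        rw [hdim, lintegral_prod _ hGmeas.aemeasurable]
    _ = _ := by
        congr 1
        funext θ
        have hmg : Measurable fun r : Ioi (0:ℝ) => F ((r : ℝ) • (θ : EuclideanSpace ℝ (Fin n))) :=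
          hF.comp (continuous_subtype_val.smul continuous_const).measurable
        have hmf : Measurable fun r : Ioi (0:ℝ) => ENNReal.ofReal ((r : ℝ) ^ (n-1)) :=
          (measurable_subtype_coe.pow_const _).ennreal_ofReal
        rw [hG]
        simp only
        rw [Measure.volumeIoiPow, lintegral_withDensity_eq_lintegral_mul _ hmf hmg]
        rw [← lintegral_subtype_comap measurableSet_Ioi
          (fun r : ℝ => ENNReal.ofReal (r ^ (n-1)) * F (r • (θ : EuclideanSpace ℝ (Fin n))))]
        rfl

theorem lemG (m : ℕ) (a c : ℝ) (ha : 0 ≤ a) (hc : 0 < c) :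
    ∫⁻ r in Ioi (0:ℝ), ENNReal.ofReal (r ^ m) * ENNReal.ofReal (r * a * rexp (-(c*r)^2))
      = ENNReal.ofReal (a * ((c ^ (m+2))⁻¹ * (Real.Gamma (((m:ℝ)+2)/2) / 2))) := by
  have hInt : IntegrableOn (fun r : ℝ => r ^ (m+1) * rexp (-(c^2) * r^2)) (Ioi 0) := by
    have h := integrableOn_rpow_mul_exp_neg_mul_sq (b := c^2) (by positivity)
      (s := ((m:ℝ)+1)) (by linarith [(Nat.cast_nonneg m : (0:ℝ) ≤ m)])
    have hcast : ∀ x : ℝ, x ^ ((m:ℝ)+1) = x ^ (m+1) := fun x => by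
      rw [show ((m:ℝ)+1) = ((m+1:ℕ):ℝ) by push_cast; ring, Real.rpow_natCast]
    simpa [hcast] using h
  calc ∫⁻ r in Ioi (0:ℝ), ENNReal.ofReal (r ^ m) * ENNReal.ofReal (r * a * rexp (-(c*r)^2))
      = ∫⁻ r in Ioi (0:ℝ), ENNReal.ofReal (a * (r ^ (m+1) * rexp (-(c^2) * r^2))) := by
        refine setLIntegral_congr_fun measurableSet_Ioi (fun r hr => ?_)
        rw [← ENNReal.ofReal_mul (pow_nonneg (le_of_lt hr) m)]
        congr 1
        rw [mul_pow]
        ring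
    _ = ENNReal.ofReal (∫ r in Ioi (0:ℝ), a * (r ^ (m+1) * rexp (-(c^2) * r^2))) := by
        rw [ofReal_integral_eq_lintegral_ofReal (hInt.const_mul a)]
        exact (ae_restrict_iff' measurableSet_Ioi).2 (ae_of_all _ fun r hr =>
          mul_nonneg ha (mul_nonneg (pow_nonneg (le_of_lt hr) _) (Real.exp_nonneg _)))
    _ = ENNReal.ofReal (a * ((c ^ (m+2))⁻¹ * (Real.Gamma (((m:ℝ)+2)/2) / 2))) := by
        congr 1
        rw [MeasureTheory.integral_const_mul]
        congr 1
        have h := integral_rpow_mul_exp_neg_mul_rpow (p := 2) (q := ((m:ℝ)+1)) (b := c^2)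
          two_pos (by linarith [(Nat.cast_nonneg m : (0:ℝ) ≤ m)]) (by positivity)
        simp_rw [Real.rpow_two] at h
        have hcast : ∀ x : ℝ, x ^ ((m:ℝ)+1) = x ^ (m+1) := fun x => by
          rw [show ((m:ℝ)+1) = ((m+1:ℕ):ℝ) by push_cast; ring, Real.rpow_natCast]
        simp_rw [hcast] at h
        rw [h]
        have hb : (c^2 : ℝ) ^ (-(((m:ℝ)+1)+1)/2) = (c^(m+2))⁻¹ := by
          rw [← Real.rpow_two, ← Real.rpow_mul hc.le,
            show (2:ℝ) * (-(((m:ℝ)+1)+1)/2) = -((m:ℝ)+2) by ring,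
            Real.rpow_neg hc.le, show ((m:ℝ)+2) = ((m+2:ℕ):ℝ) by push_cast; ring,
            Real.rpow_natCast]
        rw [hb]
        rw [show ((((m:ℝ)+1)+1)/2) = (((m:ℝ)+2)/2) by ring]
        ring

theorem kappa_eq (m : ℕ) : kappa m = Real.sqrt π ^ m / Real.Gamma ((m:ℝ)/2 + 1) := by
  rw [kappa]
  congr 1
  rw [Real.sqrt_eq_rpow, ← Real.rpow_natCast (π ^ ((1:ℝ)/2)) m, ← Real.rpow_mul pi_pos.le]
  congr 1
  ring

theorem kappa_pos (m : ℕ) : 0 < kappa m := by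
  rw [kappa_eq]
  have h1 : 0 < Real.sqrt π := Real.sqrt_pos.2 pi_pos
  have h2 : 0 < Real.Gamma ((m:ℝ)/2 + 1) := Real.Gamma_pos_of_pos (by positivity)
  positivity

/-- The generating measure of a centered ellipsoid as a zonoid: for all `x`,
`∫_{S^{n-1}} |⟨x,θ⟩| ρ_E(θ)^{n+1} dθ = 2 (κ_{n-1}/κₙ) vol(E) h_E(x)`. -/
theorem ellipsoid_zonoid_generating_measure
    (n : ℕ) (hn : 0 < n)
    (A : EuclideanSpace ℝ (Fin n) ≃ₗ[ℝ] EuclideanSpace ℝ (Fin n))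
    (E : Set (EuclideanSpace ℝ (Fin n)))
    (hE : E = A '' Metric.closedBall (0 : EuclideanSpace ℝ (Fin n)) 1)
    (x : EuclideanSpace ℝ (Fin n)) :
    (∫ θ : Metric.sphere (0 : EuclideanSpace ℝ (Fin n)) 1,
        |⟪x, (θ : EuclideanSpace ℝ (Fin n))⟫| *
          radial E (θ : EuclideanSpace ℝ (Fin n)) ^ (n + 1) ∂(sphereMeasure n)) =
      2 * (kappa (n - 1) / kappa n) * (volume E).toReal * suppFn E x := by
  haveI : NeZero n := ⟨hn.ne'⟩
  -- basic objects
  set T : EuclideanSpace ℝ (Fin n) →L[ℝ] EuclideanSpace ℝ (Fin n) :=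
    LinearMap.toContinuousLinearMap A.toLinearMap with hT
  set v : EuclideanSpace ℝ (Fin n) := ContinuousLinearMap.adjoint T x with hv
  have hdet0 : LinearMap.det (A.toLinearMap) ≠ 0 := (LinearEquiv.isUnit_det' A).ne_zero
  set D : ℝ := |LinearMap.det (A.toLinearMap)| with hD
  have hDpos : 0 < D := abs_pos.2 hdet0
  have hAx : ∀ z, ⟪x, A z⟫ = ⟪v, z⟫ := fun z =>
    (ContinuousLinearMap.adjoint_inner_left T z x).symm
  have hAsymm_cont : Continuous (A.symm) := by
    have := (A.symm.toLinearMap).continuous_of_finiteDimensional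
    rwa [LinearEquiv.coe_coe] at this
  have hA_cont : Continuous (A : EuclideanSpace ℝ (Fin n) → EuclideanSpace ℝ (Fin n)) := by
    have := (A.toLinearMap).continuous_of_finiteDimensional
    rwa [LinearEquiv.coe_coe] at this
  -- shorthand
  set g : ℝ := Real.Gamma (((n:ℝ)+1)/2) with hg
  have hgpos : 0 < g := Real.Gamma_pos_of_pos (by positivity)
  set G₀ : ℝ := g / 2 with hG₀
  have hG₀pos : 0 < G₀ := by positivity
  set f : Metric.sphere (0 : EuclideanSpace ℝ (Fin n)) 1 → ℝ :=
    fun θ => |⟪x, (θ : EuclideanSpace ℝ (Fin n))⟫| *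
      (‖A.symm (θ : EuclideanSpace ℝ (Fin n))‖⁻¹) ^ (n+1) with hf
  have hradial : ∀ θ : Metric.sphere (0 : EuclideanSpace ℝ (Fin n)) 1,
      radial E (θ : EuclideanSpace ℝ (Fin n)) = ‖A.symm (θ : EuclideanSpace ℝ (Fin n))‖⁻¹ := by
    intro θ
    rw [hE, radial]
    exact lemA A _ (mem_sphere_zero_iff_norm.1 θ.2)
  have hfmeas : Measurable f := by
    apply Measurable.mul
    · exact (continuous_const.inner continuous_subtype_val).abs.measurable
    · exact (((hAsymm_cont.comp continuous_subtype_val).norm.measurable).inv).pow_const (n+1)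
  have hcsphere : ∀ θ : Metric.sphere (0 : EuclideanSpace ℝ (Fin n)) 1,
      0 < ‖A.symm (θ : EuclideanSpace ℝ (Fin n))‖ := by
    intro θ
    have hθ0 : (θ : EuclideanSpace ℝ (Fin n)) ≠ 0 := by
      intro h
      have := mem_sphere_zero_iff_norm.1 θ.2
      rw [h, norm_zero] at this
      norm_num at this
    exact norm_pos_iff.2 (by simp [hθ0])
  -- Step 1: rewrite the integral into lintegral J
  set J : ℝ≥0∞ := ∫⁻ θ, ENNReal.ofReal (f θ) ∂(sphereMeasure n) with hJdef
  have hLHS : (∫ θ : Metric.sphere (0 : EuclideanSpace ℝ (Fin n)) 1,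
        |⟪x, (θ : EuclideanSpace ℝ (Fin n))⟫| *
          radial E (θ : EuclideanSpace ℝ (Fin n)) ^ (n + 1) ∂(sphereMeasure n)) = J.toReal := by
    have h1 : (∫ θ : Metric.sphere (0 : EuclideanSpace ℝ (Fin n)) 1,
        |⟪x, (θ : EuclideanSpace ℝ (Fin n))⟫| *
          radial E (θ : EuclideanSpace ℝ (Fin n)) ^ (n + 1) ∂(sphereMeasure n))
        = ∫ θ, f θ ∂(sphereMeasure n) := by
      refine integral_congr_ae (Filter.Eventually.of_forall fun θ => ?_)
      show |⟪x, (θ : EuclideanSpace ℝ (Fin n))⟫| *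
          radial E (θ : EuclideanSpace ℝ (Fin n)) ^ (n + 1) = f θ
      rw [hradial θ, hf]
    rw [h1, integral_eq_lintegral_of_nonneg_ae
      (Filter.Eventually.of_forall fun θ => by rw [hf]; positivity)
      hfmeas.aestronglyMeasurable, hJdef]
  -- the Gaussian-type function
  set F : EuclideanSpace ℝ (Fin n) → ℝ≥0∞ :=
    fun y => ENNReal.ofReal (|⟪x, y⟫| * rexp (-‖A.symm y‖^2)) with hF
  have hFmeas : Measurable F := by
    apply Measurable.ennreal_ofReal
    exact ((continuous_const.inner continuous_id).abs.mul
      (Real.continuous_exp.comp ((hAsymm_cont.norm.pow 2).neg))).measurable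
  -- Step 2: polar coordinates
  have hK1 : ∫⁻ y, F y = J * ENNReal.ofReal G₀ := by
    rw [lemPolar hn F hFmeas]
    have hinner : ∀ θ : Metric.sphere (0 : EuclideanSpace ℝ (Fin n)) 1,
        (∫⁻ r in Ioi (0:ℝ), ENNReal.ofReal (r ^ (n-1)) *
          F (r • (θ : EuclideanSpace ℝ (Fin n))))
        = ENNReal.ofReal (f θ) * ENNReal.ofReal G₀ := by
      intro θ
      set a : ℝ := |⟪x, (θ : EuclideanSpace ℝ (Fin n))⟫| with ha
      set c : ℝ := ‖A.symm (θ : EuclideanSpace ℝ (Fin n))‖ with hc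
      have hcpos : 0 < c := hcsphere θ
      have hptwise : ∀ r ∈ Ioi (0:ℝ),
          ENNReal.ofReal (r ^ (n-1)) * F (r • (θ : EuclideanSpace ℝ (Fin n)))
          = ENNReal.ofReal (r ^ (n-1)) * ENNReal.ofReal (r * a * rexp (-(c*r)^2)) := by
        intro r hr
        congr 1
        rw [hF]
        simp only []
        have h1 : ⟪x, r • (θ : EuclideanSpace ℝ (Fin n))⟫
            = r * ⟪x, (θ : EuclideanSpace ℝ (Fin n))⟫ := real_inner_smul_right _ _ _
        have h2 : A.symm (r • (θ : EuclideanSpace ℝ (Fin n)))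
            = r • A.symm (θ : EuclideanSpace ℝ (Fin n)) := by
          exact _root_.map_smul (A.symm) r _
        rw [h1, h2]
        rw [show ‖r • A.symm (θ : EuclideanSpace ℝ (Fin n))‖^2 = (c*r)^2 from by
          rw [norm_smul, Real.norm_eq_abs, mul_pow, sq_abs]; ring]
        rw [abs_mul, abs_of_pos (mem_Ioi.1 hr), ← ha]
      rw [setLIntegral_congr_fun measurableSet_Ioi hptwise]
      rw [lemG (n-1) a c (abs_nonneg _) hcpos]
      have hn1 : n - 1 + 2 = n + 1 := by omega
      have hcast : ((n-1 : ℕ):ℝ) + 2 = (n:ℝ) + 1 := by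
        have : ((n-1 : ℕ):ℝ) = (n:ℝ) - 1 := by
          rw [Nat.cast_sub hn]
          norm_num
        rw [this]; ring
      rw [hn1, hcast, ← hg]
      rw [show a * ((c ^ (n+1))⁻¹ * (g / 2)) = (a * (c⁻¹)^(n+1)) * (g/2) by
        rw [inv_pow]; ring]
      rw [ENNReal.ofReal_mul (by positivity)]
    calc (∫⁻ θ : Metric.sphere (0 : EuclideanSpace ℝ (Fin n)) 1,
          (∫⁻ r in Ioi (0:ℝ), ENNReal.ofReal (r ^ (n-1)) *
            F (r • (θ : EuclideanSpace ℝ (Fin n))))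
          ∂((volume : Measure (EuclideanSpace ℝ (Fin n))).toSphere))
        = ∫⁻ θ, ENNReal.ofReal (f θ) * ENNReal.ofReal G₀ ∂(sphereMeasure n) := by
          rw [sphereMeasure]
          congr 1
          funext θ
          exact hinner θ
      _ = J * ENNReal.ofReal G₀ := by
          rw [hJdef, lintegral_mul_const' _ _ ENNReal.ofReal_ne_top]
  -- Step 3: change of variables
  have hmap : Measure.map (A : EuclideanSpace ℝ (Fin n) → EuclideanSpace ℝ (Fin n)) volume
      = ENNReal.ofReal |(LinearMap.det A.toLinearMap)⁻¹| • volume := by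
    have := Measure.map_linearMap_addHaar_eq_smul_addHaar
      (volume : Measure (EuclideanSpace ℝ (Fin n))) hdet0
    rwa [LinearEquiv.coe_coe] at this
  have hFA : ∀ z, F (A z) = ENNReal.ofReal (|⟪v, z⟫| * rexp (-‖z‖^2)) := by
    intro z
    rw [hF]
    simp only []
    rw [hAx z, A.symm_apply_apply]
  have hKA : ∫⁻ y, F y = ENNReal.ofReal D * ENNReal.ofReal (‖v‖ * Real.sqrt π ^ (n-1)) := by
    have h1 : ∫⁻ y, F y ∂(Measure.map (A : EuclideanSpace ℝ (Fin n) → EuclideanSpace ℝ (Fin n))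
        volume) = ∫⁻ z, F (A z) := lintegral_map hFmeas hA_cont.measurable
    rw [hmap, lintegral_smul_measure] at h1
    have h2 : ∫⁻ z, F (A z) = ENNReal.ofReal (‖v‖ * Real.sqrt π ^ (n-1)) := by
      calc ∫⁻ z, F (A z) = ∫⁻ z, ENNReal.ofReal (|⟪v, z⟫| * rexp (-‖z‖^2)) := by
            congr 1; funext z; exact hFA z
        _ = ENNReal.ofReal (‖v‖ * Real.sqrt π ^ (n-1)) := lemD hn v
    rw [h2] at h1
    rw [← h1, smul_eq_mul, ← mul_assoc, ← ENNReal.ofReal_mul hDpos.le]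
    rw [abs_inv, ← hD, mul_inv_cancel₀ hDpos.ne', ENNReal.ofReal_one, one_mul]
  -- Step 4: solve for J
  set P : ℝ := D * (‖v‖ * Real.sqrt π ^ (n-1)) with hP
  have hPnn : 0 ≤ P := by
    have h1 : (0:ℝ) ≤ Real.sqrt π := Real.sqrt_nonneg _
    rw [hP]; positivity
  have hJ : J = ENNReal.ofReal (P / G₀) := by
    have hcomb : J * ENNReal.ofReal G₀ = ENNReal.ofReal P := by
      rw [← hK1, hKA, ← ENNReal.ofReal_mul hDpos.le, hP]
    rw [ENNReal.ofReal_div_of_pos hG₀pos]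
    rw [ENNReal.eq_div_iff (ENNReal.ofReal_pos.2 hG₀pos).ne' ENNReal.ofReal_ne_top]
    rw [mul_comm]
    exact hcomb
  -- Step 5: the right-hand side
  have hsupp : suppFn E x = ‖v‖ := by
    rw [hE, suppFn, Set.image_image]
    have : (fun z => ⟪x, A z⟫) = fun z => ⟪v, z⟫ := funext hAx
    rw [this]
    exact lemC v
  have hvol : (volume E).toReal = D * kappa n := by
    rw [hE]
    have himg := Measure.addHaar_image_linearMap
      (volume : Measure (EuclideanSpace ℝ (Fin n))) (A.toLinearMap)
      (Metric.closedBall 0 1)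
    rw [LinearEquiv.coe_coe] at himg
    rw [himg, EuclideanSpace.volume_closedBall]
    rw [ENNReal.ofReal_one, one_pow, one_mul, ENNReal.toReal_mul,
      ENNReal.toReal_ofReal (abs_nonneg _), ENNReal.toReal_ofReal (by positivity)]
    rw [← hD]
    congr 1
    rw [kappa_eq]
    simp [Fintype.card_fin]
  rw [hLHS, hJ, ENNReal.toReal_ofReal (by positivity), hsupp, hvol]
  -- final arithmetic
  have hκn : kappa n ≠ 0 := (kappa_pos n).ne'
  have hκn1 : kappa (n-1) = Real.sqrt π ^ (n-1) / g := by
    rw [kappa_eq, hg]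
    congr 2
    rw [Nat.cast_sub hn]
    norm_num
    ring
  rw [hκn1, hP, hG₀]
  field_simp
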